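/- Let m ≥ 2 be divisible by 3 and let (R_n)_{n≥0} be a cyclic urn process with m types started with one ball of type 0. Then for every n ≥ 1, E[|u_{m/3}(R_n)|²] = (n+1)/2. -/

import Mathlib

open MeasureTheory ProbabilityTheory Filter Complex Finset Topology

noncomputable section

/-- `ω = exp(2πi/m)`, the `m`-th elementary root of unity. -/
def cw (m : ℕ) : ℂ := Complex.exp (2 * Real.pi * Complex.I / m)

/-- `λ_k = cos(2πk/m)`. -/
def lam (m k : ℕ) : ℝ := Real.cos (2 * Real.pi * k / m)

/-- `μ_k = sin(2πk/m)`. -/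
def muim (m k : ℕ) : ℝ := Real.sin (2 * Real.pi * k / m)

/-- the eigenvector `v_k = (1/m)(1, ω^{-k}, …, ω^{-(m-1)k})`. -/
def vvec (m k : ℕ) : Fin m → ℂ :=
  fun t => (m : ℂ)⁻¹ * cw m ^ (-((k * (t : ℕ) : ℕ) : ℤ))

/-- the dual coefficient `u_k(w) = ∑_t ω^{kt} w_t`. -/
def ucoef (m k : ℕ) (w : Fin m → ℝ) : ℂ :=
  ∑ t : Fin m, cw m ^ (k * (t : ℕ)) * (w t : ℂ)

/-- the replacement matrix `A` of the cyclic urn. -/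
def repA (m : ℕ) : Matrix (Fin m) (Fin m) ℝ :=
  Matrix.of fun i j => if (j : ℕ) = ((i : ℕ) + 1) % m then 1 else 0

/-- the filtration `𝓕_n = σ(R_0, …, R_n)`. -/
def urnFilt {Ω : Type*} [MeasurableSpace Ω] (m : ℕ) (R : ℕ → Ω → Fin m → ℝ) (n : ℕ) :
    MeasurableSpace Ω :=
  ⨆ i ∈ Finset.range (n + 1), MeasurableSpace.comap (R i) inferInstance

/-- A cyclic urn process with `m` types started with one ball of type `j0`. -/
structure IsCyclicUrn {Ω : Type*} [MeasurableSpace Ω] (μ : Measure Ω) (m : ℕ) (j0 : Fin m)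
    (R : ℕ → Ω → Fin m → ℝ) : Prop where
  isProb : IsProbabilityMeasure μ
  meas : ∀ n, Measurable (R n)
  natVal : ∀ n ω i, ∃ z : ℕ, R n ω i = z
  init : ∀ ω, R 0 ω = fun i => if i = j0 then 1 else 0
  step : ∀ n, ∀ j : Fin m,
    μ[Set.indicator {ω | R (n + 1) ω =
        fun i => R n ω i + if (i : ℕ) = ((j : ℕ) + 1) % m then 1 else 0}
      (fun _ => (1 : ℝ)) | urnFilt m R n]
      =ᵐ[μ] fun ω => R n ω j / (n + 1)

/-- componentwise expectation `E[X]` of a random vector. -/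
def expVec {Ω : Type*} [MeasurableSpace Ω] (μ : Measure Ω) {m : ℕ}
    (X : Ω → Fin m → ℝ) : Fin m → ℝ := fun i => ∫ ω, X ω i ∂μ

/-- the martingale `M_{k,n} = (Γ(n+1)/Γ(n+1+ω^k)) u_k(R_n - E[R_n])`, with `M_{k,0} = 0`. -/
def Mart {Ω : Type*} [MeasurableSpace Ω] (μ : Measure Ω) (m k : ℕ)
    (R : ℕ → Ω → Fin m → ℝ) (n : ℕ) (ω : Ω) : ℂ :=
  if n = 0 then 0
  else (Complex.Gamma ((n : ℂ) + 1) / Complex.Gamma ((n : ℂ) + 1 + cw m ^ k)) *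
    ucoef m k (fun t => R n ω t - expVec μ (R n) t)

/-- `ν` is the centered Gaussian distribution `𝒩(0, S)` on `ℝ^d` (Cramér–Wold
characterization: every linear functional is one-dimensional centered Gaussian). -/
def IsCenteredGaussian {d : ℕ} (ν : Measure (Fin d → ℝ)) (S : Matrix (Fin d) (Fin d) ℝ) : Prop :=
  IsProbabilityMeasure ν ∧
  ∀ l : Fin d → ℝ,
    ν.map (fun x => ∑ i, l i * x i) =
      gaussianReal 0 (Real.toNNReal (∑ i, ∑ j, l i * S i j * l j))

/-- convergence in distribution of the random vectors `X_n` to the law `ν`. -/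
def TendstoInDist {Ω : Type*} [MeasurableSpace Ω] (μ : Measure Ω) {d : ℕ}
    (X : ℕ → Ω → Fin d → ℝ) (ν : Measure (Fin d → ℝ)) : Prop :=
  ∀ f : BoundedContinuousFunction (Fin d → ℝ) ℝ,
    Tendsto (fun n => ∫ ω, f (X n ω) ∂μ) atTop (𝓝 (∫ x, f x ∂ν))


-- complex helper lemmas
lemma abs_cw (m : ℕ) : ‖cw m‖ = 1 := by
  rw [cw, show (2 * Real.pi * Complex.I / m : ℂ) = ((2 * Real.pi / m : ℝ) : ℂ) * Complex.I by
    push_cast; ring, Complex.norm_exp_ofReal_mul_I]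

lemma cw_pow_self (m : ℕ) (hm : m ≠ 0) : cw m ^ m = 1 := by
  rw [cw, ← Complex.exp_nat_mul]
  have hmc : (m : ℂ) ≠ 0 := by exact_mod_cast hm
  rw [show (m : ℂ) * (2 * Real.pi * Complex.I / m) = 2 * Real.pi * Complex.I by
    field_simp]
  exact Complex.exp_two_pi_mul_I

lemma cw_pow_mod (m : ℕ) (hm : m ≠ 0) (k a : ℕ) :
    cw m ^ (k * (a % m)) = cw m ^ (k * a) := by
  conv_rhs => rw [show k * a = m * (k * (a / m)) + k * (a % m) by
    conv_lhs => rw [← Nat.div_add_mod a m]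
    ring]
  rw [pow_add, pow_mul (cw m) m, cw_pow_self m hm, one_pow, one_mul]

lemma zeta_re (m : ℕ) (hm : 2 ≤ m) (hme : 3 ∣ m) : (cw m ^ (m / 3)).re = -(1/2) := by
  obtain ⟨c, rfl⟩ := hme
  have hc : (c : ℂ) ≠ 0 := by
    have : c ≠ 0 := by omega
    exact_mod_cast this
  rw [Nat.mul_div_cancel_left c (by norm_num), cw, ← Complex.exp_nat_mul]
  rw [show (c : ℂ) * (2 * Real.pi * Complex.I / (3 * c : ℕ)) =
      ((2 * Real.pi / 3 : ℝ) : ℂ) * Complex.I by push_cast; field_simp]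
  rw [Complex.exp_ofReal_mul_I_re]
  rw [show 2 * Real.pi / 3 = Real.pi - Real.pi / 3 by ring, Real.cos_pi_sub,
    Real.cos_pi_div_three]

lemma normSq_cw_pow (m p : ℕ) : Complex.normSq (cw m ^ p) = 1 := by
  rw [← Complex.sq_norm, norm_pow, abs_cw, one_pow, one_pow]

section Urn
variable {Ω : Type*} [MeasurableSpace Ω] {μ : Measure Ω} {m : ℕ} {R : ℕ → Ω → Fin m → ℝ}
  {j0 : Fin m}

def evec (m : ℕ) (j : Fin m) : Fin m → ℝ := fun i => if (i : ℕ) = ((j : ℕ) + 1) % m then 1 else 0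

def Sset (R : ℕ → Ω → Fin m → ℝ) (n : ℕ) (j : Fin m) : Set Ω :=
  {ω | R (n + 1) ω = fun i => R n ω i + evec m j i}

lemma measurableSet_Sset (hR : ∀ i, Measurable (R i)) (n : ℕ) (j : Fin m) :
    MeasurableSet (Sset R n j) := by
  have : Sset R n j = ⋂ i, {ω | R (n + 1) ω i = R n ω i + evec m j i} := by
    ext ω; simp [Sset, funext_iff, Set.mem_iInter]
  rw [this]
  exact MeasurableSet.iInter fun i =>
    measurableSet_eq_fun ((hR (n+1)).eval) (((hR n).eval).add_const _)

lemma urnFilt_le (hR : ∀ i, Measurable (R i)) (n : ℕ) :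
    urnFilt m R n ≤ ‹MeasurableSpace Ω› :=
  iSup₂_le fun i _ => (hR i).comap_le

lemma measurable_R_filt (n i : ℕ) (hi : i ≤ n) :
    @Measurable Ω (Fin m → ℝ) (urnFilt m R n) _ (R i) :=
  measurable_iff_comap_le.mpr (le_biSup (fun i => MeasurableSpace.comap (R i) inferInstance)
    (Finset.mem_range.mpr (Nat.lt_succ_of_le hi)))

lemma continuous_ucoef (m k : ℕ) : Continuous (ucoef m k) := by
  unfold ucoef
  exact continuous_finset_sum _ fun t _ =>
    continuous_const.mul (Complex.continuous_ofReal.comp (continuous_apply t))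

lemma succ_mod_inj (m : ℕ) (j j' : Fin m) (h : ((j:ℕ)+1) % m = ((j':ℕ)+1) % m) : j = j' := by
  have hj := j.isLt; have hj' := j'.isLt
  apply Fin.ext
  rcases Nat.lt_or_ge ((j:ℕ)+1) m with h1 | h1 <;> rcases Nat.lt_or_ge ((j':ℕ)+1) m with h2 | h2
  · rw [Nat.mod_eq_of_lt h1, Nat.mod_eq_of_lt h2] at h; omega
  · have e2 : (j':ℕ)+1 = m := by omega
    rw [Nat.mod_eq_of_lt h1, e2, Nat.mod_self] at h; omega
  · have e1 : (j:ℕ)+1 = m := by omega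
    rw [Nat.mod_eq_of_lt h2, e1, Nat.mod_self] at h; omega
  · omega

omit [MeasurableSpace Ω] in
lemma Sset_disjoint (n : ℕ) {j j' : Fin m}
    (hjj : ((j:ℕ)+1) % m ≠ ((j':ℕ)+1) % m) : Sset R n j ∩ Sset R n j' = ∅ := by
  ext ω
  simp only [Set.mem_inter_iff, Set.mem_empty_iff_false, iff_false, not_and, Sset,
    Set.mem_setOf_eq]
  intro h1 h2
  rw [h1] at h2
  have hlt : ((j:ℕ)+1) % m < m := Nat.mod_lt _ (Fin.pos j)
  have h3 := congrFun h2 ⟨((j:ℕ)+1) % m, hlt⟩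
  have h4 : R n ω ⟨((j:ℕ)+1) % m, hlt⟩ + evec m j ⟨((j:ℕ)+1) % m, hlt⟩
      = R n ω ⟨((j:ℕ)+1) % m, hlt⟩ + evec m j' ⟨((j:ℕ)+1) % m, hlt⟩ := h3
  have h5 : evec m j ⟨((j:ℕ)+1) % m, hlt⟩ = evec m j' ⟨((j:ℕ)+1) % m, hlt⟩ := by linarith
  unfold evec at h5
  rw [if_pos rfl, if_neg hjj] at h5
  norm_num at h5

lemma R_nonneg (hR : IsCyclicUrn μ m j0 R) (n : ℕ) (ω : Ω) (i : Fin m) : 0 ≤ R n ω i := by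
  obtain ⟨z, hz⟩ := hR.natVal n ω i; rw [hz]; positivity

lemma sum_evec (hm : 0 < m) (j : Fin m) : ∑ i : Fin m, evec m j i = 1 := by
  unfold evec
  have ha : ((j:ℕ)+1) % m < m := Nat.mod_lt _ (by omega)
  have : ∀ i : Fin m, ((i : ℕ) = ((j:ℕ)+1) % m) = (i = ⟨_, ha⟩) := fun i => by
    simp [Fin.ext_iff]
  simp_rw [this]
  simp

lemma exists_step (hm : 0 < m) (hR : IsCyclicUrn μ m j0 R) (n : ℕ)
    (hsum : ∀ᵐ ω ∂μ, ∑ i, R n ω i = n + 1) :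
    ∀ᵐ ω ∂μ, ∃ j : Fin m, ω ∈ Sset R n j := by
  haveI := hR.isProb
  have hle := urnFilt_le hR.meas (m := m) n
  have hmeasS := fun j => measurableSet_Sset hR.meas n j
  have hint : ∀ j : Fin m, Integrable (fun ω => R n ω j / (n+1)) μ :=
    fun j => (integrable_condExp).congr (hR.step n j)
  have hμS : ∀ j : Fin m, (μ (Sset R n j)).toReal = ∫ ω, R n ω j / (n+1) ∂μ := by
    intro j
    have h1 : ∫ ω, Set.indicator (Sset R n j) (fun _ => (1:ℝ)) ω ∂μ
        = (μ (Sset R n j)).toReal := by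
      rw [MeasureTheory.integral_indicator (hmeasS j)]
      simp
      rfl
    rw [← h1, ← integral_condExp hle (f := Set.indicator (Sset R n j) (fun _ => (1:ℝ)))]
    exact integral_congr_ae (hR.step n j)
  have hsum_int : ∑ j : Fin m, (μ (Sset R n j)).toReal = 1 := by
    rw [Finset.sum_congr rfl fun j _ => hμS j, ← integral_finset_sum _ fun j _ => hint j]
    have : ∫ ω, (∑ j : Fin m, R n ω j / (n+1)) ∂μ = ∫ _ω, (1:ℝ) ∂μ := by
      refine integral_congr_ae ?_
      filter_upwards [hsum] with ω hω
      rw [← Finset.sum_div, hω]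
      field_simp
    rw [this, integral_const]
    simp
  have hdisj : Pairwise (Function.onFun Disjoint fun j : Fin m => Sset R n j) := by
    intro j j' hjj
    refine Set.disjoint_iff_inter_eq_empty.mpr (Sset_disjoint n ?_)
    intro h; exact hjj (succ_mod_inj m j j' h)
  have hunion : μ (⋃ j : Fin m, Sset R n j) = 1 := by
    rw [measure_iUnion hdisj hmeasS, tsum_fintype]
    have hne : ∀ j : Fin m, μ (Sset R n j) ≠ ⊤ := fun j => measure_ne_top μ _
    have : (∑ j : Fin m, μ (Sset R n j)).toReal = 1 := by
      rw [ENNReal.toReal_sum fun j _ => hne j]; exact hsum_int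
    exact (ENNReal.toReal_eq_one_iff _).mp this
  have hcompl : μ (⋃ j : Fin m, Sset R n j)ᶜ = 0 := by
    rw [measure_compl (MeasurableSet.iUnion hmeasS) (measure_ne_top μ _), hunion, measure_univ,
      tsub_self]
  filter_upwards [(MeasureTheory.mem_ae_iff).mpr hcompl] with ω hω
  simpa using hω

lemma sum_R (hm : 0 < m) (hR : IsCyclicUrn μ m j0 R) :
    ∀ n, ∀ᵐ ω ∂μ, ∑ i, R n ω i = n + 1 := by
  intro n
  induction n with
  | zero =>
    refine Filter.Eventually.of_forall fun ω => ?_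
    rw [hR.init ω]
    simp
  | succ n ih =>
    filter_upwards [ih, exists_step hm hR n ih] with ω h1 ⟨j, hj⟩
    have hj' : R (n+1) ω = fun i => R n ω i + evec m j i := hj
    rw [hj', Finset.sum_add_distrib, h1, sum_evec hm j]
    push_cast; ring

lemma R_bound (hm : 0 < m) (hR : IsCyclicUrn μ m j0 R) (n : ℕ) :
    ∀ᵐ ω ∂μ, ∀ i, R n ω i ≤ n + 1 := by
  filter_upwards [sum_R hm hR n] with ω hω i
  calc R n ω i ≤ ∑ i, R n ω i :=
        Finset.single_le_sum (fun i _ => R_nonneg hR n ω i) (Finset.mem_univ i)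
    _ = n + 1 := hω

-- bound on |u_k(R_n)|
lemma abs_ucoef_bound (hm : 0 < m) (hR : IsCyclicUrn μ m j0 R) (k n : ℕ) :
    ∀ᵐ ω ∂μ, ‖ucoef m k (R n ω)‖ ≤ m * (n + 1) := by
  filter_upwards [R_bound hm hR n] with ω hω
  calc ‖ucoef m k (R n ω)‖
      ≤ ∑ t : Fin m, ‖cw m ^ (k * (t:ℕ)) * (R n ω t : ℂ)‖ :=
        (norm_sum_le _ _)
    _ ≤ ∑ _t : Fin m, ((n : ℝ) + 1) := by
        refine Finset.sum_le_sum fun t _ => ?_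
        rw [norm_mul, norm_pow, abs_cw, one_pow, one_mul, Complex.norm_real, Real.norm_eq_abs,
          _root_.abs_of_nonneg (R_nonneg hR n ω t)]
        exact hω t
    _ = m * (n + 1) := by simp [Finset.sum_const]; ring

lemma ucoef_add (m k : ℕ) (w v : Fin m → ℝ) :
    ucoef m k (fun i => w i + v i) = ucoef m k w + ucoef m k v := by
  unfold ucoef
  rw [← Finset.sum_add_distrib]
  refine Finset.sum_congr rfl fun t _ => ?_
  push_cast
  ring

lemma ucoef_evec (m k : ℕ) (hm : 0 < m) (j : Fin m) :
    ucoef m k (evec m j) = (cw m ^ k) ^ ((j : ℕ) + 1) := by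
  unfold ucoef evec
  have ha : ((j:ℕ)+1) % m < m := Nat.mod_lt _ (by omega)
  have h1 : ∀ t : Fin m, ((t : ℕ) = ((j:ℕ)+1) % m) = (t = ⟨_, ha⟩) := fun t => by
    simp [Fin.ext_iff]
  simp_rw [h1, apply_ite Complex.ofReal, Complex.ofReal_one, Complex.ofReal_zero, mul_ite,
    mul_one, mul_zero, Finset.sum_ite_eq' Finset.univ]
  simp only [Finset.mem_univ, if_true]
  rw [cw_pow_mod m (by omega) k ((j:ℕ)+1), pow_mul]

-- ucoef as polynomial in ζ := cw^k
lemma ucoef_eq_sum_pow (m k : ℕ) (w : Fin m → ℝ) :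
    ucoef m k w = ∑ t : Fin m, (w t : ℂ) * (cw m ^ k) ^ (t : ℕ) := by
  unfold ucoef
  exact Finset.sum_congr rfl fun t _ => by rw [pow_mul]; ring

end Urn

section Rec
variable {Ω : Type*} [MeasurableSpace Ω] {μ : Measure Ω} {m : ℕ} {R : ℕ → Ω → Fin m → ℝ}
  {j0 : Fin m}

lemma recursion (hm2 : 2 ≤ m) (hme : 3 ∣ m) (hR : IsCyclicUrn μ m j0 R) (n : ℕ) :
    ∫ ω, Complex.normSq (ucoef m (m/3) (R (n+1) ω)) ∂μ
      = ∫ ω, Complex.normSq (ucoef m (m/3) (R n ω)) ∂μ + 1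
        - (∫ ω, Complex.normSq (ucoef m (m/3) (R n ω)) ∂μ) / (n+1) := by
  have hm : 0 < m := by omega
  haveI := hR.isProb
  have hle := urnFilt_le hR.meas (m := m) n
  set k := m / 3 with hk
  set ζ := cw m ^ k with hζ
  set X : ℕ → Ω → ℂ := fun i ω => ucoef m k (R i ω) with hX
  set c : Fin m → ℂ := fun j => ζ ^ ((j : ℕ) + 1) with hc
  set h : Fin m → Ω → ℝ :=
    fun j ω => Complex.normSq (X n ω) + 1 + 2 * (X n ω * (starRingEnd ℂ) (c j)).re with hh
  set I : Fin m → Ω → ℝ := fun j => Set.indicator (Sset R n j) (fun _ => (1:ℝ)) with hI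
  have measX : ∀ i, Measurable (X i) := fun i =>
    (continuous_ucoef m k).measurable.comp (hR.meas i)
  have measH : ∀ j, Measurable (h j) := fun j =>
    ((Complex.continuous_normSq.measurable.comp (measX n)).add_const 1).add
      ((Complex.measurable_re.comp ((measX n).mul_const _)).const_mul 2)
  have measI : ∀ j, Measurable (I j) :=
    fun j => measurable_const.indicator (measurableSet_Sset hR.meas n j)
  have habsc : ∀ j : Fin m, ‖c j‖ = 1 := fun j => by
    simp only [hc, hζ, norm_pow, abs_cw, one_pow]
  set B : ℝ := m * (n + 1) with hB
  have hB0 : 0 ≤ B := by positivity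
  set C : ℝ := B^2 + 1 + 2*B with hC
  have hBnd : ∀ᵐ ω ∂μ, ∀ j : Fin m, |h j ω * I j ω| ≤ C := by
    filter_upwards [abs_ucoef_bound hm hR k n] with ω hω j
    have h1 : Complex.normSq (X n ω) ≤ B^2 := by
      rw [← Complex.sq_norm]
      exact pow_le_pow_left₀ (norm_nonneg _) hω 2
    have h2 : |(X n ω * (starRingEnd ℂ) (c j)).re| ≤ B := by
      refine (Complex.abs_re_le_norm _).trans ?_
      rw [norm_mul, Complex.norm_conj, habsc j, mul_one]
      exact hω
    have h3 : |I j ω| ≤ 1 := by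
      rw [hI]
      by_cases hmem : ω ∈ Sset R n j <;> simp [Set.indicator, hmem]
    have h4 : |h j ω| ≤ C := by
      have h6 := abs_le.mp h2
      have h5 := Complex.normSq_nonneg (X n ω)
      have hval : h j ω
          = Complex.normSq (X n ω) + 1 + 2 * (X n ω * (starRingEnd ℂ) (c j)).re := rfl
      rw [hval, abs_le]
      constructor <;> nlinarith [h6.1, h6.2]
    calc |h j ω * I j ω| = |h j ω| * |I j ω| := abs_mul _ _
      _ ≤ C * 1 := by
          apply mul_le_mul h4 h3 (abs_nonneg _)
          exact (abs_nonneg _).trans h4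
      _ = C := mul_one C
  have intI : ∀ j, Integrable (I j) μ :=
    fun j => (integrable_const 1).indicator (measurableSet_Sset hR.meas n j)
  have intHI : ∀ j : Fin m, Integrable (h j * I j) μ := fun j => by
    refine Integrable.mono' (integrable_const C)
      (((measH j).mul (measI j)).aestronglyMeasurable) ?_
    filter_upwards [hBnd] with ω hω
    rw [Pi.mul_apply, Real.norm_eq_abs]
    exact hω j
  have hsm : ∀ j : Fin m, StronglyMeasurable[urnFilt m R n] (h j) := fun j => by
    have hRm := measurable_R_filt (R := R) n n le_rfl
    have hcont : Continuous (fun w : Fin m → ℝ =>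
        Complex.normSq (ucoef m k w) + 1 +
          2 * (ucoef m k w * (starRingEnd ℂ) (c j)).re) :=
      ((Complex.continuous_normSq.comp (continuous_ucoef m k)).add continuous_const).add
        (continuous_const.mul (Complex.continuous_re.comp
          ((continuous_ucoef m k).mul continuous_const)))
    exact (hcont.measurable.comp hRm).stronglyMeasurable
  -- a.e. decomposition of normSq (X (n+1))
  have hdecomp : (fun ω => Complex.normSq (X (n+1) ω)) =ᵐ[μ] ∑ j : Fin m, h j * I j := by
    filter_upwards [exists_step hm hR n (sum_R hm hR n)] with ω hω
    obtain ⟨j', hj'⟩ := hω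
    have hRe : R (n+1) ω = fun i => R n ω i + evec m j' i := hj'
    have hXe : X (n+1) ω = X n ω + c j' := by
      show ucoef m k (R (n+1) ω) = _
      rw [hRe, ucoef_add, ucoef_evec m k hm j']
    rw [Finset.sum_apply]
    rw [Finset.sum_eq_single j']
    · rw [Pi.mul_apply]
      have hI1 : I j' ω = 1 := Set.indicator_of_mem hj' _
      have hnc : Complex.normSq (c j') = 1 := by
        show Complex.normSq ((cw m ^ k) ^ ((j':ℕ)+1)) = 1
        rw [← pow_mul]
        exact normSq_cw_pow m _
      rw [hI1, mul_one, hXe, Complex.normSq_add, hnc]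
    · intro b _ hb
      have hnot : ω ∉ Sset R n b := by
        intro hmem
        have hne : ((j':ℕ)+1) % m ≠ ((b:ℕ)+1) % m := fun he => hb (succ_mod_inj m j' b he).symm
        have := Sset_disjoint (R := R) n hne
        exact absurd (Set.mem_inter hj' hmem) (by rw [this]; exact Set.notMem_empty ω)
      have hI0 : I b ω = 0 := Set.indicator_of_notMem hnot _
      rw [Pi.mul_apply, hI0, mul_zero]
    · intro hj
      exact absurd (Finset.mem_univ j') hj
  -- conditional expectation
  have hcond : μ[fun ω => Complex.normSq (X (n+1) ω)|urnFilt m R n] =ᵐ[μ]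
      fun ω => ∑ j : Fin m, h j ω * (R n ω j / (n+1)) := by
    refine (condExp_congr_ae hdecomp).trans ?_
    refine (condExp_finsetSum (fun j _ => intHI j) (urnFilt m R n)).trans ?_
    have hterm : ∀ j ∈ Finset.univ, μ[h j * I j|urnFilt m R n] =ᵐ[μ]
        fun ω => h j ω * (R n ω j / (n+1)) := by
      intro j _
      refine (condExp_mul_of_stronglyMeasurable_left (hsm j) (intHI j) (intI j)).trans ?_
      filter_upwards [hR.step n j] with ω hω
      rw [Pi.mul_apply]
      rw [show (μ[I j|urnFilt m R n]) ω = R n ω j / (n+1) from hω]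
    refine (eventuallyEq_sum hterm).trans ?_
    refine Eventually.of_forall fun ω => ?_
    rw [Finset.sum_apply]
  -- pointwise evaluation of the sum
  have hpoint : (fun ω => ∑ j : Fin m, h j ω * (R n ω j / (n+1))) =ᵐ[μ]
      fun ω => Complex.normSq (X n ω) + 1 - Complex.normSq (X n ω)/(n+1) := by
    filter_upwards [sum_R hm hR n] with ω hω
    have hz : ∑ j : Fin m, (R n ω j : ℂ) * c j = ζ * X n ω := by
      have hXs : X n ω = ∑ t : Fin m, (R n ω t : ℂ) * ζ ^ (t:ℕ) :=
        ucoef_eq_sum_pow m k (R n ω)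
      rw [hXs, Finset.mul_sum]
      refine Finset.sum_congr rfl fun j _ => ?_
      show (R n ω j : ℂ) * ζ ^ ((j:ℕ)+1) = ζ * ((R n ω j : ℂ) * ζ ^ (j:ℕ))
      ring
    have hre : ∑ j : Fin m, (X n ω * (starRingEnd ℂ) (c j)).re * R n ω j
        = Complex.normSq (X n ω) * (-(1/2)) := by
      have e1 : ∀ j : Fin m, (X n ω * (starRingEnd ℂ) (c j)).re * R n ω j
          = ((R n ω j : ℂ) * (X n ω * (starRingEnd ℂ) (c j))).re := fun j => by
        rw [Complex.re_ofReal_mul]; ring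
      rw [Finset.sum_congr rfl fun j _ => e1 j, ← Complex.re_sum]
      have e2 : ∑ j : Fin m, (R n ω j : ℂ) * (X n ω * (starRingEnd ℂ) (c j))
          = X n ω * (starRingEnd ℂ) (∑ j : Fin m, (R n ω j : ℂ) * c j) := by
        rw [map_sum, Finset.mul_sum]
        refine Finset.sum_congr rfl fun j _ => ?_
        rw [map_mul, Complex.conj_ofReal]
        ring
      rw [e2, hz]
      rw [show X n ω * (starRingEnd ℂ) (ζ * X n ω)
          = ((Complex.normSq (X n ω) : ℝ) : ℂ) * (starRingEnd ℂ) ζ by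
        rw [map_mul, ← Complex.mul_conj]; ring]
      rw [Complex.re_ofReal_mul, Complex.conj_re, hζ, zeta_re m hm2 hme]
    have hn1 : (n:ℝ) + 1 ≠ 0 := by positivity
    have e3 : ∑ j : Fin m, h j ω * (R n ω j / (n+1))
        = (∑ j : Fin m, h j ω * R n ω j)/(n+1) := by
      rw [Finset.sum_div]
      exact Finset.sum_congr rfl fun j _ => by ring
    have e4 : ∑ j : Fin m, h j ω * R n ω j
        = (Complex.normSq (X n ω) + 1) * (∑ j : Fin m, R n ω j)
          + 2 * (∑ j : Fin m, (X n ω * (starRingEnd ℂ) (c j)).re * R n ω j) := by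
      rw [Finset.mul_sum, Finset.mul_sum, ← Finset.sum_add_distrib]
      refine Finset.sum_congr rfl fun j _ => ?_
      show (Complex.normSq (X n ω) + 1 + 2 * (X n ω * (starRingEnd ℂ) (c j)).re) * R n ω j = _
      ring
    rw [e3, e4, hω, hre]
    field_simp
    ring
  -- put it together
  have intN : Integrable (fun ω => Complex.normSq (X n ω)) μ := by
    refine Integrable.mono' (integrable_const (B^2))
      ((Complex.continuous_normSq.measurable.comp (measX n)).aestronglyMeasurable) ?_
    filter_upwards [abs_ucoef_bound hm hR k n] with ω hω
    rw [Real.norm_eq_abs, _root_.abs_of_nonneg (Complex.normSq_nonneg _), ← Complex.sq_norm]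
    exact pow_le_pow_left₀ (norm_nonneg _) hω 2
  calc ∫ ω, Complex.normSq (ucoef m (m/3) (R (n+1) ω)) ∂μ
      = ∫ ω, (μ[fun ω => Complex.normSq (X (n+1) ω)|urnFilt m R n]) ω ∂μ :=
        (integral_condExp hle).symm
    _ = ∫ ω, (Complex.normSq (X n ω) + 1 - Complex.normSq (X n ω)/(n+1)) ∂μ :=
        integral_congr_ae (hcond.trans hpoint)
    _ = ∫ ω, Complex.normSq (ucoef m (m/3) (R n ω)) ∂μ + 1
        - (∫ ω, Complex.normSq (ucoef m (m/3) (R n ω)) ∂μ) / (n+1) := by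
        have e5 : Integrable (fun ω => Complex.normSq (X n ω) + 1) μ :=
          intN.add (integrable_const 1)
        have e6 : Integrable (fun ω => Complex.normSq (X n ω) / ((n:ℝ)+1)) μ :=
          intN.div_const _
        rw [integral_sub e5 e6, integral_add intN (integrable_const 1), integral_div,
          integral_const]
        simp
        rfl

end Rec

theorem stmt9 {Ω : Type*} [MeasurableSpace Ω] (μ : Measure Ω) (m : ℕ) (hm : 2 ≤ m)
    (hme : 3 ∣ m) (R : ℕ → Ω → Fin m → ℝ) (hR : IsCyclicUrn μ m ⟨0, by omega⟩ R)
    (n : ℕ) (hn : 1 ≤ n) :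
    ∫ ω, (‖ucoef m (m / 3) (R n ω)‖) ^ 2 ∂μ = ((n : ℝ) + 1) / 2 := by
  have hm0 : 0 < m := by omega
  haveI := hR.isProb
  have habs : ∀ i : ℕ, ∫ ω, (‖ucoef m (m/3) (R i ω)‖)^2 ∂μ
      = ∫ ω, Complex.normSq (ucoef m (m/3) (R i ω)) ∂μ := fun i =>
    integral_congr_ae (Eventually.of_forall fun ω => Complex.sq_norm _)
  rw [habs n]
  have base0 : ∫ ω, Complex.normSq (ucoef m (m/3) (R 0 ω)) ∂μ = 1 := by
    have hval : ∀ ω : Ω, Complex.normSq (ucoef m (m/3) (R 0 ω)) = 1 := fun ω => by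
      rw [hR.init ω]
      have : ucoef m (m/3) (fun i => if i = (⟨0, by omega⟩ : Fin m) then (1:ℝ) else 0) = 1 := by
        unfold ucoef
        simp_rw [apply_ite Complex.ofReal, Complex.ofReal_one, Complex.ofReal_zero, mul_ite,
          mul_one, mul_zero, Finset.sum_ite_eq' Finset.univ]
        simp
      rw [this]
      simp
    simp_rw [hval]
    simp
  induction n, hn using Nat.le_induction with
  | base =>
    rw [recursion hm hme hR 0, base0]
    norm_num
  | succ n hn ih =>
    rw [recursion hm hme hR n, ih]
    have h1 : (n:ℝ) + 1 ≠ 0 := by positivity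
    push_cast
    field_simp
    ring

end
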